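/- arXiv:1308.4629 — 2 statements merged into one kernel-verified Lean document; each statement's English description precedes it below -/
import Mathlib

section
/- Let E : ℕ → ℝ be a sequence of real numbers and for t ∈ ℝ let U_t denote the time-evolution map on ℓ²(ℕ, ℂ) given by (U_t c)ₙ = exp(-i·Eₙ·t)·cₙ. Then for every c ∈ ℓ²(ℕ, ℂ), the norm closure of the forward orbit {U_s c : s ≥ 0} contains the full orbit {U_t c : t ∈ ℝ}. -/
open scoped ENNReal
open Filter Metric Topology

lemma norm_exp_real_mul_I (x : ℝ) : ‖Complex.exp ((x : ℂ) * Complex.I)‖ = 1 := by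
  simp [Complex.norm_exp]

lemma recurrence (N : ℕ) (θ : Fin N → ℝ) {δ : ℝ} (hδ : 0 < δ) (T : ℝ) :
    ∃ r : ℝ, T ≤ r ∧ ∀ n : Fin N, ‖Complex.exp ((θ n * r : ℝ) * Complex.I) - 1‖ < δ := by
  set x : ℕ → (Fin N → ℂ) := fun k n => Complex.exp ((θ n * k : ℝ) * Complex.I) with hx
  have hxmem : ∀ k, x k ∈ Metric.closedBall (0 : Fin N → ℂ) 1 := by
    intro k
    rw [Metric.mem_closedBall, dist_zero_right, pi_norm_le_iff_of_nonneg zero_le_one]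
    intro n
    exact le_of_eq (norm_exp_real_mul_I _)
  obtain ⟨a, -, φ, hφ, hconv⟩ :=
    tendsto_subseq_of_bounded Metric.isBounded_closedBall hxmem
  have hcauchy : CauchySeq (x ∘ φ) := hconv.cauchySeq
  rw [Metric.cauchySeq_iff] at hcauchy
  obtain ⟨M, hM⟩ := hcauchy δ hδ
  set j : ℕ := max M (φ M + ⌈max T 0⌉₊ + 1) with hj
  have hjM : M ≤ j := le_max_left _ _
  have hφj : φ M + ⌈max T 0⌉₊ + 1 ≤ φ j :=
    le_trans (le_max_right _ _) hφ.le_apply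
  refine ⟨((φ j - φ M : ℕ) : ℝ), ?_, ?_⟩
  · have h1 : (⌈max T 0⌉₊ : ℝ) ≤ ((φ j - φ M : ℕ) : ℝ) := by
      have : ⌈max T 0⌉₊ ≤ φ j - φ M := by omega
      exact_mod_cast this
    have h2 : T ≤ (⌈max T 0⌉₊ : ℝ) := (le_max_left T 0).trans (Nat.le_ceil _)
    linarith
  · intro n
    have hd := hM j hjM M (le_refl M)
    have hdn : dist (x (φ j) n) (x (φ M) n) < δ :=
      lt_of_le_of_lt (dist_le_pi_dist (x (φ j)) (x (φ M)) n) hd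
    have hfac : x (φ j) n - x (φ M) n
        = Complex.exp ((θ n * (φ M) : ℝ) * Complex.I) *
          (Complex.exp ((θ n * ((φ j - φ M : ℕ) : ℝ) : ℝ) * Complex.I) - 1) := by
      have hsplit : (θ n * (φ j) : ℝ) = θ n * (φ M) + θ n * ((φ j - φ M : ℕ) : ℝ) := by
        have h3 : ((φ j - φ M : ℕ) : ℝ) = (φ j : ℝ) - (φ M : ℝ) := by
          have : φ M ≤ φ j := by omega
          push_cast [Nat.cast_sub this]
          ring
        rw [h3]; ring
      simp only [hx, mul_sub, mul_one, ← Complex.exp_add]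
      congr 1
      push_cast [hsplit]
      ring
    have hne : ‖x (φ j) n - x (φ M) n‖
        = ‖Complex.exp ((θ n * ((φ j - φ M : ℕ) : ℝ) : ℝ) * Complex.I) - 1‖ := by
      rw [hfac, norm_mul, norm_exp_real_mul_I, one_mul]
    rw [← hne]
    simpa [dist_eq_norm] using hdn

/-- The time-evolution map `U_t` on `ℓ²(ℕ, ℂ)`: `(U_t c)ₙ = exp(-i·Eₙ·t)·cₙ`. -/
noncomputable def timeEvol (E : ℕ → ℝ) (t : ℝ) (c : lp (fun _ : ℕ => ℂ) 2) :
    lp (fun _ : ℕ => ℂ) 2 :=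
  ⟨fun n => Complex.exp ((-(E n * t) : ℝ) * Complex.I) * (c : ∀ _ : ℕ, ℂ) n, by
    apply memℓp_gen
    have hs : Summable fun n : ℕ => ‖(c : ∀ _ : ℕ, ℂ) n‖ ^ (2 : ℝ≥0∞).toReal :=
      (lp.memℓp c).summable (by norm_num)
    refine hs.congr fun n => ?_
    simp [norm_mul, Complex.norm_exp]⟩

/-- the closure of the forward orbit contains the full orbit. -/
theorem full_orbit_subset_closure_forward_orbit (E : ℕ → ℝ)
    (c : lp (fun _ : ℕ => ℂ) 2) :
    {x | ∃ t : ℝ, x = timeEvol E t c} ⊆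
      closure {x | ∃ s : ℝ, 0 ≤ s ∧ x = timeEvol E s c} := by
  rintro x ⟨t, rfl⟩
  rw [Metric.mem_closure_iff]
  intro ε hε
  -- notation
  set cf : ∀ _ : ℕ, ℂ := (c : ∀ _ : ℕ, ℂ) with hcf
  set g : ℕ → ℝ := fun n => ‖cf n‖ ^ 2 with hg
  have hgnn : ∀ n, 0 ≤ g n := fun n => sq_nonneg _
  have hsum : Summable g := by
    have hs : Summable fun n : ℕ => ‖cf n‖ ^ (2 : ℝ≥0∞).toReal :=
      (lp.memℓp c).summable (by norm_num)
    refine hs.congr fun n => ?_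
    show ‖cf n‖ ^ ((2 : ℝ≥0∞).toReal) = ‖cf n‖ ^ 2
    rw [show ((2 : ℝ≥0∞).toReal) = ((2 : ℕ) : ℝ) by norm_num, Real.rpow_natCast]
  set S : ℝ := ∑' n, g n with hS
  have hSnn : 0 ≤ S := tsum_nonneg hgnn
  -- choose δ
  set δ : ℝ := ε / (2 * Real.sqrt (S + 1)) with hδdef
  have hsq : 0 < Real.sqrt (S + 1) := Real.sqrt_pos.2 (by linarith)
  have hδ : 0 < δ := div_pos hε (by positivity)
  have hδ2 : δ ^ 2 * S ≤ ε ^ 2 / 4 := by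
    have h1 : δ ^ 2 = ε ^ 2 / (4 * (S + 1)) := by
      rw [hδdef, div_pow, mul_pow, Real.sq_sqrt (by linarith)]
      ring
    rw [h1]
    rw [div_mul_eq_mul_div, div_le_div_iff₀ (by linarith) (by norm_num)]
    nlinarith [sq_nonneg ε]
  -- choose N with small tail
  obtain ⟨N, hN⟩ : ∃ N : ℕ, ∑' n, g (n + N) < ε ^ 2 / 8 := by
    have ht : Tendsto (fun i => ∑' k, g (k + i)) atTop (𝓝 0) := tendsto_sum_nat_add g
    exact (ht.eventually (gt_mem_nhds (by positivity))).exists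
  -- recurrence
  obtain ⟨r, hrT, hr⟩ := recurrence N (fun n => -(E n)) hδ (max 0 (-t))
  have hr0 : 0 ≤ t + r := by
    have := le_max_right 0 (-t)
    linarith [le_trans this hrT]
  refine ⟨timeEvol E (t + r) c, ⟨t + r, hr0, rfl⟩, ?_⟩
  rw [dist_eq_norm]
  -- the difference
  set D := timeEvol E t c - timeEvol E (t + r) c with hD
  have hDco : ∀ n, ‖(D : ∀ _ : ℕ, ℂ) n‖
      = ‖Complex.exp ((-(E n) * r : ℝ) * Complex.I) - 1‖ * ‖cf n‖ := by
    intro n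
    have h1 : (D : ∀ _ : ℕ, ℂ) n
        = Complex.exp ((-(E n * t) : ℝ) * Complex.I) * cf n
          - Complex.exp ((-(E n * (t + r)) : ℝ) * Complex.I) * cf n := by
      rw [hD, lp.coeFn_sub]; rfl
    have hBe : Complex.exp ((-(E n * (t + r)) : ℝ) * Complex.I)
        = Complex.exp ((-(E n * t) : ℝ) * Complex.I) *
          Complex.exp ((-(E n) * r : ℝ) * Complex.I) := by
      rw [← Complex.exp_add]
      congr 1
      push_cast
      ring
    have h2 : (D : ∀ _ : ℕ, ℂ) n
        = Complex.exp ((-(E n * t) : ℝ) * Complex.I) *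
            ((1 - Complex.exp ((-(E n) * r : ℝ) * Complex.I)) * cf n) := by
      rw [h1, hBe]
      ring
    rw [h2, norm_mul, norm_exp_real_mul_I, one_mul, norm_mul, norm_sub_rev]
  -- pointwise bounds
  set h : ℕ → ℝ := fun n => ‖(D : ∀ _ : ℕ, ℂ) n‖ ^ 2 with hh
  have hb4 : ∀ n, h n ≤ 4 * g n := by
    intro n
    rw [hh]
    simp only [hDco, mul_pow, hg]
    have hle : ‖Complex.exp ((-(E n) * r : ℝ) * Complex.I) - 1‖ ≤ 2 := by
      calc ‖Complex.exp ((-(E n) * r : ℝ) * Complex.I) - 1‖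
          ≤ ‖Complex.exp ((-(E n) * r : ℝ) * Complex.I)‖ + ‖(1 : ℂ)‖ := norm_sub_le _ _
        _ = 2 := by rw [norm_exp_real_mul_I]; norm_num
    have h0 := norm_nonneg (Complex.exp ((-(E n) * r : ℝ) * Complex.I) - 1)
    have hx2 : ‖Complex.exp ((-(E n) * r : ℝ) * Complex.I) - 1‖ ^ 2 ≤ 4 := by nlinarith
    exact mul_le_mul_of_nonneg_right hx2 (sq_nonneg _)
  have hbδ : ∀ n < N, h n ≤ δ ^ 2 * g n := by
    intro n hn
    have := hr ⟨n, hn⟩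
    simp only at this
    rw [hh]
    simp only [hDco, mul_pow, hg]
    have h0 := norm_nonneg (Complex.exp ((-(E n) * r : ℝ) * Complex.I) - 1)
    have hx2 : ‖Complex.exp ((-(E n) * r : ℝ) * Complex.I) - 1‖ ^ 2 ≤ δ ^ 2 :=
      pow_le_pow_left₀ h0 this.le 2
    exact mul_le_mul_of_nonneg_right hx2 (sq_nonneg _)
  have hhsum : Summable h := by
    refine Summable.of_nonneg_of_le (fun n => sq_nonneg _) hb4 ?_
    exact hsum.mul_left 4
  -- norm squared as tsum
  have hnorm : ‖D‖ ^ (2 : ℝ) = ∑' n, h n := by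
    have := lp.norm_rpow_eq_tsum (p := 2) (by norm_num) D
    rw [show (2 : ℝ≥0∞).toReal = (2 : ℝ) by norm_num] at this
    rw [this]
    congr 1
    ext n
    show ‖(D : ∀ _ : ℕ, ℂ) n‖ ^ ((2 : ℝ)) = ‖(D : ∀ _ : ℕ, ℂ) n‖ ^ 2
    rw [show (2 : ℝ) = ((2 : ℕ) : ℝ) by norm_num, Real.rpow_natCast]
  -- estimate the tsum
  have hsplit : ∑' n, h n = (∑ n ∈ Finset.range N, h n) + ∑' n, h (n + N) :=
    (hhsum.sum_add_tsum_nat_add N).symm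
  have hhead : (∑ n ∈ Finset.range N, h n) ≤ δ ^ 2 * S := by
    calc (∑ n ∈ Finset.range N, h n)
        ≤ ∑ n ∈ Finset.range N, δ ^ 2 * g n := by
          refine Finset.sum_le_sum fun n hn => hbδ n (Finset.mem_range.1 hn)
      _ = δ ^ 2 * ∑ n ∈ Finset.range N, g n := by rw [Finset.mul_sum]
      _ ≤ δ ^ 2 * S := by
          refine mul_le_mul_of_nonneg_left ?_ (sq_nonneg δ)
          exact hsum.sum_le_tsum _ (fun n _ => hgnn n)
  have htail : ∑' n, h (n + N) ≤ 4 * ∑' n, g (n + N) := by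
    rw [← tsum_mul_left]
    refine Summable.tsum_le_tsum (fun n => hb4 (n + N)) ?_ ?_
    · exact (summable_nat_add_iff N).2 hhsum
    · exact ((summable_nat_add_iff N).2 hsum).mul_left 4
  have htot : ∑' n, h n < ε ^ 2 := by
    rw [hsplit]
    have : 4 * ∑' n, g (n + N) < ε ^ 2 / 2 := by linarith
    nlinarith
  have hfin : ‖D‖ ^ 2 < ε ^ 2 := by
    have : ‖D‖ ^ (2 : ℝ) = ‖D‖ ^ (2 : ℕ) := by
      rw [← Real.rpow_natCast ‖D‖ 2]; norm_num
    rw [← this, hnorm]; exact htot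
  exact lt_of_pow_lt_pow_left₀ 2 hε.le hfin
end

section
/- (Uniform recurrence on compact sets.) Let E : ℕ → ℝ be a sequence of real numbers and for t ∈ ℝ let U_t denote the time-evolution map on ℓ²(ℕ, ℂ) given by (U_t c)ₙ = exp(-i·Eₙ·t)·cₙ. Let X ⊆ ℓ²(ℕ, ℂ) be a compact set. Then for every δ > 0 and every τ > 0 there exists a single time T > τ such that ‖c - U_T c‖ < δ for all c ∈ X simultaneously. -/
open scoped ENNReal

lemma timeEvol_apply (E : ℕ → ℝ) (t : ℝ) (c : lp (fun _ : ℕ => ℂ) 2) (n : ℕ) :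
    (timeEvol E t c : ∀ _ : ℕ, ℂ) n
      = Complex.exp ((-(E n * t) : ℝ) * Complex.I) * (c : ∀ _ : ℕ, ℂ) n := rfl

lemma summable_norm_sq (f : lp (fun _ : ℕ => ℂ) 2) :
    Summable (fun n => ‖(f : ∀ _ : ℕ, ℂ) n‖ ^ 2) := by
  have hs : Summable fun n : ℕ => ‖(f : ∀ _ : ℕ, ℂ) n‖ ^ (2 : ℝ≥0∞).toReal :=
    (lp.memℓp f).summable (by norm_num)
  refine hs.congr fun n => ?_
  rw [show ((2 : ℝ≥0∞)).toReal = ((2 : ℕ) : ℝ) by norm_num, Real.rpow_natCast]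

lemma norm_sq_eq (f : lp (fun _ : ℕ => ℂ) 2) :
    ‖f‖ ^ 2 = ∑' n, ‖(f : ∀ _ : ℕ, ℂ) n‖ ^ 2 := by
  have h := lp.norm_rpow_eq_tsum (p := 2) (by norm_num) f
  rw [show ((2 : ℝ≥0∞)).toReal = ((2 : ℕ) : ℝ) by norm_num, Real.rpow_natCast] at h
  rw [h]
  exact tsum_congr fun n => by rw [Real.rpow_natCast]

lemma timeEvol_norm (E : ℕ → ℝ) (t : ℝ) (c : lp (fun _ : ℕ => ℂ) 2) :
    ‖timeEvol E t c‖ = ‖c‖ := by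
  rw [lp.norm_eq_tsum_rpow (p := 2) (by norm_num), lp.norm_eq_tsum_rpow (p := 2) (by norm_num)]
  congr 1
  refine tsum_congr fun n => ?_
  rw [timeEvol_apply]
  congr 1
  simp [norm_mul, Complex.norm_exp]

lemma timeEvol_sub (E : ℕ → ℝ) (t : ℝ) (a b : lp (fun _ : ℕ => ℂ) 2) :
    timeEvol E t a - timeEvol E t b = timeEvol E t (a - b) := by
  apply Subtype.ext
  funext n
  have : ((timeEvol E t a - timeEvol E t b : lp (fun _ : ℕ => ℂ) 2) : ∀ _ : ℕ, ℂ) n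
      = (timeEvol E t a : ∀ _ : ℕ, ℂ) n - (timeEvol E t b : ∀ _ : ℕ, ℂ) n := rfl
  rw [this, timeEvol_apply, timeEvol_apply, timeEvol_apply]
  have hab : ((a - b : lp (fun _ : ℕ => ℂ) 2) : ∀ _ : ℕ, ℂ) n
      = (a : ∀ _ : ℕ, ℂ) n - (b : ∀ _ : ℕ, ℂ) n := rfl
  rw [hab]
  ring

/-- Pigeonhole on the torus: simultaneous approximate recurrence for finitely many
frequencies with a time larger than `τ`. -/
lemma exists_recurrence_time (E : ℕ → ℝ) (N : ℕ) (η τ : ℝ) (hη : 0 < η) (hτ : 0 < τ) :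
    ∃ T : ℝ, T > τ ∧ ∀ n < N, ‖1 - Complex.exp ((-(E n * T) : ℝ) * Complex.I)‖ < η := by
  set g : ℕ → (Fin N → ℂ) := fun j n =>
    Complex.exp ((-(E n * (2 * τ * j)) : ℝ) * Complex.I) with hg
  have hmem : ∀ j, g j ∈ Metric.closedBall (0 : Fin N → ℂ) 1 := by
    intro j
    rw [Metric.mem_closedBall, dist_zero_right]
    refine (pi_norm_le_iff_of_nonneg zero_le_one).2 fun n => ?_
    simp [hg, Complex.norm_exp]
  obtain ⟨a, -, φ, hφ, hconv⟩ :=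
    (isCompact_closedBall (0 : Fin N → ℂ) 1).tendsto_subseq hmem
  obtain ⟨M, hM⟩ := (Metric.tendsto_atTop.1 hconv) (η / 2) (half_pos hη)
  set j := φ M with hj
  set k := φ (M + 1) with hk
  have hjk : j < k := hφ (Nat.lt_succ_self M)
  set T : ℝ := 2 * τ * ((k : ℝ) - (j : ℝ)) with hT
  have hkj1 : (1 : ℝ) ≤ (k : ℝ) - (j : ℝ) := by
    have : (j : ℝ) + 1 ≤ (k : ℝ) := by exact_mod_cast hjk
    linarith
  have hTτ : T > τ := by nlinarith
  refine ⟨T, hTτ, fun n hn => ?_⟩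
  have h1 : dist (g j) (g k) < η := by
    have hja := hM M le_rfl
    have hka := hM (M + 1) (Nat.le_succ M)
    calc dist (g j) (g k) ≤ dist (g j) a + dist (g k) a := dist_triangle_right _ _ _
      _ < η / 2 + η / 2 := by exact add_lt_add hja hka
      _ = η := by ring
  have h2 : ‖g j ⟨n, hn⟩ - g k ⟨n, hn⟩‖ < η := by
    have := dist_le_pi_dist (g j) (g k) ⟨n, hn⟩
    rw [dist_eq_norm] at this
    exact lt_of_le_of_lt this h1
  have key : g j ⟨n, hn⟩ - g k ⟨n, hn⟩
      = g j ⟨n, hn⟩ * (1 - Complex.exp ((-(E n * T) : ℝ) * Complex.I)) := by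
    have hexp : g j ⟨n, hn⟩ * Complex.exp ((-(E n * T) : ℝ) * Complex.I) = g k ⟨n, hn⟩ := by
      simp only [hg]
      rw [← Complex.exp_add]
      congr 1
      rw [← add_mul]
      rw [← Complex.ofReal_add]
      congr 1
      rw [hT]
      push_cast
      ring
    rw [mul_sub, mul_one, hexp]
  have hunit : ‖g j ⟨n, hn⟩‖ = 1 := by
    simp [hg, Complex.norm_exp]
  calc ‖1 - Complex.exp ((-(E n * T) : ℝ) * Complex.I)‖
      = ‖g j ⟨n, hn⟩‖ * ‖1 - Complex.exp ((-(E n * T) : ℝ) * Complex.I)‖ := by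
        rw [hunit, one_mul]
    _ = ‖g j ⟨n, hn⟩ * (1 - Complex.exp ((-(E n * T) : ℝ) * Complex.I))‖ := (norm_mul _ _).symm
    _ = ‖g j ⟨n, hn⟩ - g k ⟨n, hn⟩‖ := by rw [← key]
    _ < η := h2

/-- Quantitative bound: if the multipliers are `η`-close to 1 on the first `N`
coordinates, the recurrence defect is controlled by `η` and the tail. -/
lemma recurrence_bound (E : ℕ → ℝ) (T : ℝ) (c : lp (fun _ : ℕ => ℂ) 2) (N : ℕ) (η : ℝ)
    (hη : 0 ≤ η)
    (hN : ∀ n < N, ‖1 - Complex.exp ((-(E n * T) : ℝ) * Complex.I)‖ ≤ η) :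
    ‖c - timeEvol E T c‖ ^ 2
      ≤ η ^ 2 * ‖c‖ ^ 2 + 4 * ∑' n, ‖(c : ∀ _ : ℕ, ℂ) (n + N)‖ ^ 2 := by
  set f : ℕ → ℝ := fun n =>
    ‖((c - timeEvol E T c : lp (fun _ : ℕ => ℂ) 2) : ∀ _ : ℕ, ℂ) n‖ ^ 2 with hf
  set G : ℕ → ℝ := fun n => ‖(c : ∀ _ : ℕ, ℂ) n‖ ^ 2 with hG
  have hGs : Summable G := summable_norm_sq c
  have hfs : Summable f := summable_norm_sq _
  have hfe : ∀ n, f n = ‖1 - Complex.exp ((-(E n * T) : ℝ) * Complex.I)‖ ^ 2 * G n := by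
    intro n
    have hsub : ((c - timeEvol E T c : lp (fun _ : ℕ => ℂ) 2) : ∀ _ : ℕ, ℂ) n
        = (c : ∀ _ : ℕ, ℂ) n - (timeEvol E T c : ∀ _ : ℕ, ℂ) n := rfl
    rw [hf]
    simp only [hsub, timeEvol_apply]
    rw [show (c : ∀ _ : ℕ, ℂ) n - Complex.exp ((-(E n * T) : ℝ) * Complex.I) * (c : ∀ _ : ℕ, ℂ) n
        = (1 - Complex.exp ((-(E n * T) : ℝ) * Complex.I)) * (c : ∀ _ : ℕ, ℂ) n by ring]
    rw [norm_mul, mul_pow]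
  have hbound2 : ∀ n, f n ≤ 4 * G n := by
    intro n
    rw [hfe n]
    have h1 : ‖1 - Complex.exp ((-(E n * T) : ℝ) * Complex.I)‖ ≤ 2 := by
      calc ‖1 - Complex.exp ((-(E n * T) : ℝ) * Complex.I)‖
          ≤ ‖(1 : ℂ)‖ + ‖Complex.exp ((-(E n * T) : ℝ) * Complex.I)‖ := norm_sub_le _ _
        _ = 2 := by simp [Complex.norm_exp]; norm_num
    have hGn : 0 ≤ G n := by positivity
    have he2 : ‖1 - Complex.exp ((-(E n * T) : ℝ) * Complex.I)‖ ^ 2 ≤ 4 := by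
      have h := pow_le_pow_left₀ (norm_nonneg _) h1 2
      exact h.trans_eq (by norm_num)
    exact mul_le_mul_of_nonneg_right he2 hGn
  rw [norm_sq_eq]
  rw [← Summable.sum_add_tsum_nat_add N hfs]
  have hhead : ∑ n ∈ Finset.range N, f n ≤ η ^ 2 * ‖c‖ ^ 2 := by
    have h1 : ∑ n ∈ Finset.range N, f n ≤ ∑ n ∈ Finset.range N, η ^ 2 * G n := by
      refine Finset.sum_le_sum fun n hn => ?_
      rw [hfe n]
      have hGn : 0 ≤ G n := by positivity
      have he2 : ‖1 - Complex.exp ((-(E n * T) : ℝ) * Complex.I)‖ ^ 2 ≤ η ^ 2 :=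
        pow_le_pow_left₀ (norm_nonneg _) (hN n (Finset.mem_range.1 hn)) 2
      exact mul_le_mul_of_nonneg_right he2 hGn
    have h2 : ∑ n ∈ Finset.range N, G n ≤ ∑' n, G n :=
      Summable.sum_le_tsum _ (fun n _ => by positivity) hGs
    rw [norm_sq_eq c]
    calc ∑ n ∈ Finset.range N, f n ≤ ∑ n ∈ Finset.range N, η ^ 2 * G n := h1
      _ = η ^ 2 * ∑ n ∈ Finset.range N, G n := by rw [Finset.mul_sum]
      _ ≤ η ^ 2 * ∑' n, G n := mul_le_mul_of_nonneg_left h2 (by positivity)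
  have htail : ∑' n, f (n + N) ≤ 4 * ∑' n, G (n + N) := by
    have h4 : Summable fun n => 4 * G (n + N) :=
      ((summable_nat_add_iff N).2 hGs).mul_left 4
    calc ∑' n, f (n + N) ≤ ∑' n, 4 * G (n + N) :=
          Summable.tsum_le_tsum (fun n => hbound2 (n + N)) ((summable_nat_add_iff N).2 hfs) h4
      _ = 4 * ∑' n, G (n + N) := tsum_mul_left
  linarith

/-- uniform recurrence on compact sets. -/
theorem uniform_recurrence_compact (E : ℕ → ℝ) (X : Set (lp (fun _ : ℕ => ℂ) 2))
    (hX : IsCompact X) (δ τ : ℝ) (hδ : 0 < δ) (hτ : 0 < τ) :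
    ∃ T : ℝ, T > τ ∧ ∀ c ∈ X, ‖c - timeEvol E T c‖ < δ := by
  set ε : ℝ := δ / 3 with hε
  have hε0 : 0 < ε := by positivity
  obtain ⟨t, hts, htfin, hcover⟩ := hX.finite_cover_balls hε0
  set s : Finset (lp (fun _ : ℕ => ℂ) 2) := htfin.toFinset with hs
  have hsmem : ∀ x, x ∈ s ↔ x ∈ t := fun x => htfin.mem_toFinset
  -- choose common truncation N
  have htails : ∀ x ∈ s, ∀ᶠ N in Filter.atTop,
      ∑' n, ‖(x : ∀ _ : ℕ, ℂ) (n + N)‖ ^ 2 < ε ^ 2 / 16 := by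
    intro x _
    have := tendsto_sum_nat_add (fun n => ‖(x : ∀ _ : ℕ, ℂ) n‖ ^ 2)
    have h := this.eventually (eventually_lt_nhds (show (0:ℝ) < ε ^ 2 / 16 by positivity))
    exact h
  have hall : ∀ᶠ N in Filter.atTop, ∀ x ∈ s,
      ∑' n, ‖(x : ∀ _ : ℕ, ℂ) (n + N)‖ ^ 2 < ε ^ 2 / 16 :=
    (Filter.eventually_all_finset s).2 htails
  obtain ⟨N, hNs⟩ := hall.exists
  -- bound on norms of centers
  set R : ℝ := 1 + ∑ x ∈ s, ‖x‖ with hR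
  have hR1 : (1 : ℝ) ≤ R := by
    have : (0:ℝ) ≤ ∑ x ∈ s, ‖x‖ := Finset.sum_nonneg fun x _ => norm_nonneg x
    linarith
  have hRx : ∀ x ∈ s, ‖x‖ ≤ R := by
    intro x hx
    have := Finset.single_le_sum (f := fun y => ‖y‖) (fun y _ => norm_nonneg y) hx
    linarith
  set η : ℝ := ε / (2 * R) with hη
  have hη0 : 0 < η := by positivity
  obtain ⟨T, hTτ, hTn⟩ := exists_recurrence_time E N η τ hη0 hτ
  refine ⟨T, hTτ, fun c hc => ?_⟩
  obtain ⟨x, hxt, hxball⟩ := Set.mem_iUnion₂.1 (hcover hc)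
  have hxs : x ∈ s := (hsmem x).2 hxt
  have hcx : ‖c - x‖ < ε := by
    rw [← dist_eq_norm]; exact Metric.mem_ball.1 hxball
  -- center recurrence
  have hxrec : ‖x - timeEvol E T x‖ < ε := by
    have hb := recurrence_bound E T x N η hη0.le (fun n hn => (hTn n hn).le)
    have htail := hNs x hxs
    have hxR := hRx x hxs
    have hηx : η * ‖x‖ ≤ ε / 2 := by
      rw [hη]
      rw [div_mul_eq_mul_div]
      rw [div_le_div_iff₀ (by positivity) (by norm_num)]
      nlinarith [norm_nonneg x]
    have hsq : ‖x - timeEvol E T x‖ ^ 2 < ε ^ 2 := by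
      have h1 : η ^ 2 * ‖x‖ ^ 2 ≤ (ε / 2) ^ 2 := by
        have := mul_self_le_mul_self (by positivity : (0:ℝ) ≤ η * ‖x‖) hηx
        calc η ^ 2 * ‖x‖ ^ 2 = (η * ‖x‖) * (η * ‖x‖) := by ring
          _ ≤ (ε / 2) * (ε / 2) := this
          _ = (ε / 2) ^ 2 := by ring
      nlinarith
    exact lt_of_pow_lt_pow_left₀ 2 hε0.le hsq
  -- assemble via triangle inequality
  have hpres : ‖timeEvol E T x - timeEvol E T c‖ = ‖x - c‖ := by
    rw [timeEvol_sub, timeEvol_norm]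
  have htri : ‖c - timeEvol E T c‖
      ≤ ‖c - x‖ + ‖x - timeEvol E T x‖ + ‖timeEvol E T x - timeEvol E T c‖ := by
    calc ‖c - timeEvol E T c‖
        = ‖(c - x) + (x - timeEvol E T x) + (timeEvol E T x - timeEvol E T c)‖ := by
          congr 1; abel
      _ ≤ ‖(c - x) + (x - timeEvol E T x)‖ + ‖timeEvol E T x - timeEvol E T c‖ :=
          norm_add_le _ _
      _ ≤ ‖c - x‖ + ‖x - timeEvol E T x‖ + ‖timeEvol E T x - timeEvol E T c‖ := by
          have := norm_add_le (c - x) (x - timeEvol E T x); linarith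
  have hxc : ‖x - c‖ = ‖c - x‖ := norm_sub_rev _ _
  rw [hpres, hxc] at htri
  calc ‖c - timeEvol E T c‖ ≤ ‖c - x‖ + ‖x - timeEvol E T x‖ + ‖c - x‖ := htri
    _ < ε + ε + ε := by linarith
    _ = δ := by rw [hε]; ring
end
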